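/- arXiv:2104.12577 — 4 statements merged into one kernel-verified Lean document; each statement's English description precedes it below -/
import Mathlib

section
/- Let f_1, …, f_m : ℝ^n → ℝ be affine functions. The number of distinct sign vectors s : {1,…,m} → {-1, 0, +1} that are realized by some point x ∈ ℝ^n (i.e., s(j) = sign(f_j(x)) for all j) is at most 2^n · (m+1)^n. -/
open Finset

/-- Set of realized sign vectors of `m` affine functions on `ℝ^n`. -/
def SV (n m : ℕ) (a : Fin m → Fin n → ℝ) (b : Fin m → ℝ) : Set (Fin m → SignType) :=
  {s | ∃ x : Fin n → ℝ, ∀ j, s j = SignType.sign ((∑ i, a j i * x i) + b j)}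

/-- Sign vectors realized on the zero set of an extra affine function. -/
def SV0 (n m : ℕ) (a : Fin m → Fin n → ℝ) (b : Fin m → ℝ) (c : Fin n → ℝ) (d : ℝ) :
    Set (Fin m → SignType) :=
  {s | ∃ x : Fin n → ℝ, ((∑ i, c i * x i) + d = 0) ∧
      ∀ j, s j = SignType.sign ((∑ i, a j i * x i) + b j)}

lemma comb_eq (n : ℕ) (d : Fin n → ℝ) (e t : ℝ) (x x' : Fin n → ℝ) :
    (∑ i, d i * ((1-t)*x i + t*x' i)) + e
      = (1-t)*((∑ i, d i * x i) + e) + t*((∑ i, d i * x' i) + e) := by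
  have h : ∀ i, d i * ((1-t)*x i + t*x' i) = (1-t)*(d i * x i) + t*(d i * x' i) :=
    fun i => by ring
  rw [Finset.sum_congr rfl (fun i _ => h i), Finset.sum_add_distrib,
    ← Finset.mul_sum, ← Finset.mul_sum]; ring

lemma sign_comb {u v t : ℝ} (ht0 : 0 ≤ t) (ht1 : t ≤ 1)
    (h : SignType.sign u = SignType.sign v) :
    SignType.sign ((1-t)*u + t*v) = SignType.sign u := by
  rcases lt_trichotomy u 0 with hu | hu | hu
  · have hv : v < 0 := by
      have := (sign_eq_neg_one_iff.mpr hu).symm.trans h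
      exact sign_eq_neg_one_iff.mp this.symm
    rw [sign_eq_neg_one_iff.mpr hu, sign_eq_neg_one_iff]
    rcases le_total u v with huv | huv
    · nlinarith [mul_nonneg (by linarith : (0:ℝ) ≤ 1 - t) (by linarith : (0:ℝ) ≤ v - u)]
    · nlinarith [mul_nonneg ht0 (by linarith : (0:ℝ) ≤ u - v)]
  · have hv : v = 0 := by
      have := (sign_eq_zero_iff.mpr hu).symm.trans h
      exact sign_eq_zero_iff.mp this.symm
    simp [hu, hv]
  · have hv : 0 < v := by
      have := (sign_eq_one_iff.mpr hu).symm.trans h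
      exact sign_eq_one_iff.mp this.symm
    rw [sign_eq_one_iff.mpr hu, sign_eq_one_iff]
    rcases le_total u v with huv | huv
    · nlinarith [mul_nonneg (by linarith : (0:ℝ) ≤ 1 - t) (by linarith : (0:ℝ) ≤ v - u)]
    · nlinarith [mul_nonneg ht0 (by linarith : (0:ℝ) ≤ u - v)]

/-- If a sign vector is realized at a point where `f > 0` and at a point where `f < 0`,
then it is realized at a point where `f = 0`. -/
lemma mem_SV0_of (n m : ℕ) (a : Fin m → Fin n → ℝ) (b : Fin m → ℝ)
    (c : Fin n → ℝ) (d : ℝ) (s : Fin m → SignType) (x x' : Fin n → ℝ)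
    (hx : ∀ j, s j = SignType.sign ((∑ i, a j i * x i) + b j))
    (hx' : ∀ j, s j = SignType.sign ((∑ i, a j i * x' i) + b j))
    (hp : 0 < (∑ i, c i * x i) + d) (hq : (∑ i, c i * x' i) + d < 0) :
    s ∈ SV0 n m a b c d := by
  set p := (∑ i, c i * x i) + d with hpdef
  set q := (∑ i, c i * x' i) + d with hqdef
  set t := p / (p - q) with htdef
  have hpq : 0 < p - q := by linarith
  have ht0 : 0 ≤ t := le_of_lt (div_pos hp hpq)
  have ht1 : t ≤ 1 := by rw [htdef, div_le_one hpq]; linarith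
  refine ⟨fun i => (1-t)*x i + t*x' i, ?_, ?_⟩
  · rw [comb_eq, ← hpdef, ← hqdef, htdef]
    field_simp
    ring
  · intro j
    rw [comb_eq]
    rw [sign_comb ht0 ht1 ((hx j).symm.trans (hx' j))]
    exact hx j

lemma ncard_prod_univ {α β : Type*} [Finite β] (s : Set α) :
    (s ×ˢ (Set.univ : Set β)).ncard = s.ncard * Nat.card β := by
  simp only [Set.ncard, Nat.card]
  have := (Nat.card_congr (Equiv.Set.prod s (Set.univ : Set β))).trans
    (Nat.card_prod _ _)
  simp [Nat.card]
  exact Or.inl rfl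

lemma countStep (n m : ℕ) (a : Fin (m+1) → Fin n → ℝ) (b : Fin (m+1) → ℝ) :
    (SV n (m+1) a b).ncard ≤
      (SV n m (fun j => a j.castSucc) (fun j => b j.castSucc)).ncard
        + 2 * (SV0 n m (fun j => a j.castSucc) (fun j => b j.castSucc)
            (a (Fin.last m)) (b (Fin.last m))).ncard := by
  classical
  set A := fun j : Fin m => a j.castSucc with hA
  set B := fun j : Fin m => b j.castSucc with hB
  set c := a (Fin.last m) with hcdef
  set d := b (Fin.last m) with hddef
  set S := SV n (m+1) a b with hS
  set S' := SV n m A B with hS'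
  set Z := SV0 n m A B c d with hZ
  -- key claim: two distinct realized sign vectors with equal restriction force
  -- the restriction to be realized on the zero set of the last function
  have claim : ∀ s ∈ S, ∀ t ∈ S, s ∘ Fin.castSucc = t ∘ Fin.castSucc → s ≠ t →
      (s ∘ Fin.castSucc) ∈ Z := by
    rintro s ⟨x, hx⟩ t ⟨y, hy⟩ hres hne
    have hlast : s (Fin.last m) ≠ t (Fin.last m) := by
      intro h
      apply hne
      funext j
      refine Fin.lastCases h (fun j => congrFun hres j) j
    have hu : s (Fin.last m) = SignType.sign ((∑ i, c i * x i) + d) := hx (Fin.last m)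
    have hv : t (Fin.last m) = SignType.sign ((∑ i, c i * y i) + d) := hy (Fin.last m)
    rcases lt_trichotomy ((∑ i, c i * x i) + d) 0 with hux | hux | hux
    · rcases lt_trichotomy ((∑ i, c i * y i) + d) 0 with hvy | hvy | hvy
      · exact absurd (hu.trans ((sign_eq_neg_one_iff.mpr hux).trans
          ((sign_eq_neg_one_iff.mpr hvy).symm.trans hv.symm))) hlast
      · refine ⟨y, by rw [hvy], fun j => ?_⟩
        rw [congrFun hres j]
        exact hy j.castSucc
      · -- y gives positive value, x negative
        have := mem_SV0_of n m A B c d (s ∘ Fin.castSucc) y x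
          (fun j => by rw [congrFun hres j]; exact hy j.castSucc)
          (fun j => hx j.castSucc) hvy hux
        exact this
    · exact ⟨x, by rw [hux], fun j => hx j.castSucc⟩
    · rcases lt_trichotomy ((∑ i, c i * y i) + d) 0 with hvy | hvy | hvy
      · exact mem_SV0_of n m A B c d (s ∘ Fin.castSucc) x y
          (fun j => hx j.castSucc)
          (fun j => by rw [congrFun hres j]; exact hy j.castSucc) hux hvy
      · refine ⟨y, by rw [hvy], fun j => ?_⟩
        rw [congrFun hres j]
        exact hy j.castSucc
      · exact absurd (hu.trans ((sign_eq_one_iff.mpr hux).trans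
          ((sign_eq_one_iff.mpr hvy).symm.trans hv.symm))) hlast
  set T0 := {s ∈ S | (s ∘ Fin.castSucc) ∉ Z} with hT0
  set T1 := {s ∈ S | (s ∘ Fin.castSucc) ∈ Z} with hT1
  have hunion : S = T0 ∪ T1 := by
    ext s; simp only [hT0, hT1, Set.mem_union, Set.mem_setOf_eq, Set.mem_sep_iff]; tauto
  have h1 : S.ncard ≤ T0.ncard + T1.ncard := by
    rw [hunion]; exact Set.ncard_union_le _ _
  have hZS' : Z ⊆ S' := by rintro s ⟨x, _, hx⟩; exact ⟨x, hx⟩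
  have h2 : T0.ncard ≤ (S' \ Z).ncard := by
    apply Set.ncard_le_ncard_of_injOn (fun s => s ∘ Fin.castSucc)
    · rintro s ⟨⟨x, hx⟩, hnot⟩
      exact ⟨⟨x, fun j => hx j.castSucc⟩, hnot⟩
    · rintro s ⟨hs, hsnot⟩ t ⟨ht, _⟩ hst
      by_contra hne
      exact hsnot (claim s hs t ht hst hne)
  have h3 : T1.ncard ≤ (Z ×ˢ (Set.univ : Set SignType)).ncard := by
    apply Set.ncard_le_ncard_of_injOn (fun s => (s ∘ Fin.castSucc, s (Fin.last m)))
    · rintro s ⟨_, hmem⟩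
      exact ⟨hmem, trivial⟩
    · rintro s _ t _ hst
      have h1' : s ∘ Fin.castSucc = t ∘ Fin.castSucc := congrArg Prod.fst hst
      have h2' : s (Fin.last m) = t (Fin.last m) := congrArg Prod.snd hst
      funext j
      refine Fin.lastCases h2' (fun j => congrFun h1' j) j
  have h4 : (Z ×ˢ (Set.univ : Set SignType)).ncard = Z.ncard * 3 := by
    rw [ncard_prod_univ]
    congr 1
    simp [Nat.card_eq_fintype_card]
    decide
  have h5 : (S' \ Z).ncard + Z.ncard = S'.ncard :=
    Set.ncard_diff_add_ncard_of_subset hZS' (Set.toFinite _)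
  omega

lemma SV0_subset (n m : ℕ) (a : Fin m → Fin (n+1) → ℝ) (b : Fin m → ℝ)
    (c : Fin (n+1) → ℝ) (d : ℝ) (i0 : Fin (n+1)) (hc : c i0 ≠ 0) :
    SV0 (n+1) m a b c d ⊆
      SV n m (fun j i => a j (i0.succAbove i) - a j i0 * c (i0.succAbove i) / c i0)
        (fun j => b j - a j i0 * d / c i0) := by
  rintro s ⟨x, hx0, hx⟩
  refine ⟨fun i => x (i0.succAbove i), fun j => ?_⟩
  rw [hx j]
  congr 1
  have hsum : c i0 * x i0 + ∑ i, c (i0.succAbove i) * x (i0.succAbove i) + d = 0 := by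
    have := Fin.sum_univ_succAbove (fun i => c i * x i) i0
    linarith [hx0, this]
  rw [Fin.sum_univ_succAbove (fun i => a j i * x i) i0]
  have expand : ∑ i, (a j (i0.succAbove i) - a j i0 * c (i0.succAbove i) / c i0) * x (i0.succAbove i)
      = (∑ i, a j (i0.succAbove i) * x (i0.succAbove i))
        - (a j i0 / c i0) * ∑ i, c (i0.succAbove i) * x (i0.succAbove i) := by
    rw [Finset.mul_sum, ← Finset.sum_sub_distrib]
    exact Finset.sum_congr rfl fun i _ => by ring
  rw [expand]
  have h2 : ∑ i, c (i0.succAbove i) * x (i0.succAbove i) = -(c i0 * x i0) - d := by linarith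
  rw [h2]
  field_simp
  ring

lemma key : ∀ (m n : ℕ) (a : Fin m → Fin n → ℝ) (b : Fin m → ℝ),
    (SV n m a b).ncard ≤ 2 ^ n * (m + 1) ^ n := by
  intro m
  induction m with
  | zero =>
    intro n a b
    have h1 : (SV n 0 a b).ncard ≤ (Set.univ : Set (Fin 0 → SignType)).ncard :=
      Set.ncard_le_ncard (Set.subset_univ _) (Set.toFinite _)
    have h2 : (Set.univ : Set (Fin 0 → SignType)).ncard = 1 := by
      simp [Set.ncard_univ]
    calc (SV n 0 a b).ncard ≤ 1 := by omega
      _ ≤ 2 ^ n * (0 + 1) ^ n := by simp [Nat.one_le_two_pow]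
  | succ m ih =>
    intro n a b
    set a' := fun j => a (Fin.castSucc j) with ha'
    set b' := fun j => b (Fin.castSucc j) with hb'
    set c := a (Fin.last m) with hcdef
    set d := b (Fin.last m) with hddef
    by_cases hc : ∀ i, c i = 0
    · -- last function is constant; restriction is injective
      have hinj : (SV n (m+1) a b).ncard ≤ (SV n m a' b').ncard := by
        apply Set.ncard_le_ncard_of_injOn (fun s => s ∘ Fin.castSucc)
        · rintro s ⟨x, hx⟩
          exact ⟨x, fun j => hx j.castSucc⟩
        · rintro s ⟨x, hx⟩ t ⟨y, hy⟩ hst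
          funext j
          refine Fin.lastCases ?_ (fun j => congrFun hst j) j
          have hz : ∀ i, a (Fin.last m) i = 0 := fun i => hc i
          have h1 : ∑ i : Fin n, a (Fin.last m) i * x i = 0 :=
            Finset.sum_eq_zero fun i _ => by rw [hz i]; ring
          have h2 : ∑ i : Fin n, a (Fin.last m) i * y i = 0 :=
            Finset.sum_eq_zero fun i _ => by rw [hz i]; ring
          rw [hx (Fin.last m)]
          rw [hy (Fin.last m)]
          rw [h1]
          rw [h2]
      calc (SV n (m+1) a b).ncard ≤ 2 ^ n * (m + 1) ^ n := le_trans hinj (ih n a' b')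
        _ ≤ 2 ^ n * (m + 1 + 1) ^ n :=
          Nat.mul_le_mul_left _ (Nat.pow_le_pow_left (by omega) n)
    · push_neg at hc
      obtain ⟨i0, hi0⟩ := hc
      have hn : n ≠ 0 := by rintro rfl; exact i0.elim0
      obtain ⟨k, rfl⟩ : ∃ k, n = k + 1 := ⟨n - 1, by omega⟩
      · have hstep : (SV (k+1) (m+1) a b).ncard ≤
            (SV (k+1) m a' b').ncard + 2 * (SV0 (k+1) m a' b' c d).ncard :=
          countStep (k+1) m a b
        have hS' := ih (k+1) a' b'
        have hS'' : (SV0 (k+1) m a' b' c d).ncard ≤ 2 ^ k * (m + 1) ^ k := by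
          refine le_trans (Set.ncard_le_ncard (SV0_subset k m a' b' c d i0 hi0)
            (Set.toFinite _)) (ih k _ _)
        have harith : 2 ^ (k+1) * (m + 1) ^ (k+1) + 2 * (2 ^ k * (m + 1) ^ k)
            ≤ 2 ^ (k+1) * (m + 1 + 1) ^ (k+1) := by
          have hle : (m+1) ^ k ≤ (m+2) ^ k := Nat.pow_le_pow_left (by omega) k
          have e1 : 2 ^ (k+1) * (m + 1) ^ (k+1) + 2 * (2 ^ k * (m + 1) ^ k)
              = 2 ^ (k+1) * ((m+1) ^ k * (m + 2)) := by ring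
          have e2 : 2 ^ (k+1) * (m + 1 + 1) ^ (k+1) = 2 ^ (k+1) * ((m+2) ^ k * (m+2)) := by
            ring
          rw [e1, e2]
          exact Nat.mul_le_mul_left _ (Nat.mul_le_mul_right _ hle)
        omega
  
/-- The number of sign vectors realized by `m` affine functions on `ℝ^n`
is at most `2^n * (m+1)^n`. -/
theorem sign_vectors_card_le (n m : ℕ) (a : Fin m → Fin n → ℝ) (b : Fin m → ℝ) :
    Set.ncard {s : Fin m → SignType |
        ∃ x : Fin n → ℝ, ∀ j, s j = SignType.sign ((∑ i, a j i * x i) + b j)} ≤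
      2 ^ n * (m + 1) ^ n := by
  exact key m n a b
end

section
/- Fix positive integers n, N, M. Define an equivalence relation on [0,M)^n by v ≈ v' iff for every coordinate i, ⌊N·v_i⌋ = ⌊N·v'_i⌋; for every i, fract(N·v_i) = 0 ↔ fract(N·v'_i) = 0; and for all coordinates i, j, fract(N·v_i) ≤ fract(N·v_j) ↔ fract(N·v'_i) ≤ fract(N·v'_j). Then the number of equivalence classes is at most n! · (2MN)^n. -/
/-- For a monotone sequence, two entries are equal iff no "strict increase point"
occurs between them. -/
lemma tie_iff_aux {n : ℕ} (s : Fin n → ℝ) (hs : Monotone s)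
    (a c : Fin n) (hac : a ≤ c) :
    s a = s c ↔ ∀ k : Fin n, a < k → k ≤ c → ¬ (∀ j < k, s j < s k) := by
  constructor
  · intro h k hak hkc hall
    have h1 : s a < s k := hall a hak
    have h2 : s k ≤ s c := hs hkc
    rw [h] at h1; linarith
  · intro h
    by_contra hne
    have hlt : s a < s c := lt_of_le_of_ne (hs hac) hne
    have hac' : a < c := by
      rcases lt_or_eq_of_le hac with h' | h'
      · exact h'
      · rw [h'] at hlt; exact absurd hlt (lt_irrefl _)
    classical
    set T : Finset (Fin n) := Finset.univ.filter (fun k => a < k ∧ s a < s k) with hT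
    have hcT : c ∈ T := by simp [hT, hac', hlt]
    have hTne : T.Nonempty := ⟨c, hcT⟩
    set k0 := T.min' hTne with hk0
    have hk0T : k0 ∈ T := T.min'_mem hTne
    have hk0p : a < k0 ∧ s a < s k0 := by simpa [hT] using hk0T
    have hk0c : k0 ≤ c := T.min'_le c hcT
    refine h k0 hk0p.1 hk0c ?_
    intro j hj
    rcases le_or_gt j a with hja | hja
    · exact lt_of_le_of_lt (hs hja) hk0p.2
    · have hjT : j ∉ T := fun hjT => absurd (T.min'_le j hjT) (not_le.mpr hj)
      have : ¬ (s a < s j) := by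
        intro hsa; exact hjT (by simp [hT, hja, hsa])
      exact lt_of_le_of_lt (not_lt.mp this) hk0p.2

/-- The "block boundary / zero" bits of a tuple. -/
noncomputable def regBits {n : ℕ} (g : Fin n → ℝ) : Fin n → Bool :=
  fun k => if (k : ℕ) = 0 then decide ((g ∘ Tuple.sort g) k = 0)
    else decide (∀ j < k, (g ∘ Tuple.sort g) j < (g ∘ Tuple.sort g) k)

/-- Order relation recovered from permutation + bits. -/
def ordP {n : ℕ} (σ : Equiv.Perm (Fin n)) (b : Fin n → Bool) (i j : Fin n) : Prop :=
  σ⁻¹ i ≤ σ⁻¹ j ∨ ∀ k : Fin n, σ⁻¹ j < k → k ≤ σ⁻¹ i → b k = false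

/-- Zero predicate recovered from permutation + bits. -/
def zeroP {n : ℕ} (hn : 0 < n) (σ : Equiv.Perm (Fin n)) (b : Fin n → Bool) (i : Fin n) : Prop :=
  b ⟨0, hn⟩ = true ∧ ∀ k : Fin n, (⟨0, hn⟩ : Fin n) < k → k ≤ σ⁻¹ i → b k = false

lemma order_char {n : ℕ} (g : Fin n → ℝ) (i j : Fin n) :
    g i ≤ g j ↔ ordP (Tuple.sort g) (regBits g) i j := by
  set σ := Tuple.sort g with hσ
  set s : Fin n → ℝ := g ∘ σ with hs
  have hmono : Monotone s := Tuple.monotone_sort g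
  have hgi : g i = s (σ⁻¹ i) := by simp [hs]
  have hgj : g j = s (σ⁻¹ j) := by simp [hs]
  set a := σ⁻¹ i
  set c := σ⁻¹ j
  rw [hgi, hgj]
  unfold ordP
  rcases le_or_gt a c with hac | hca
  · refine iff_of_true ?_ (Or.inl hac)
    exact hmono hac
  · have h1 : s a ≤ s c ↔ s c = s a := ⟨fun h => le_antisymm (hmono hca.le) h,
      fun h => h.ge⟩
    rw [h1, tie_iff_aux s hmono c a hca.le]
    constructor
    · intro h
      right
      intro k hk1 hk2
      have hk0 : (k : ℕ) ≠ 0 := by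
        have : (c : ℕ) < (k : ℕ) := hk1
        omega
      simp only [regBits, if_neg hk0, decide_eq_false_iff_not]
      exact h k hk1 hk2
    · rintro (h | h)
      · exact absurd h (not_le.mpr hca)
      · intro k hk1 hk2
        have hk0 : (k : ℕ) ≠ 0 := by
          have : (c : ℕ) < (k : ℕ) := hk1
          omega
        have := h k hk1 hk2
        simpa only [regBits, if_neg hk0, decide_eq_false_iff_not] using this

lemma zero_char {n : ℕ} (hn : 0 < n) (g : Fin n → ℝ) (hg : ∀ i, 0 ≤ g i) (i : Fin n) :
    g i = 0 ↔ zeroP hn (Tuple.sort g) (regBits g) i := by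
  set σ := Tuple.sort g with hσ
  set s : Fin n → ℝ := g ∘ σ with hs
  have hmono : Monotone s := Tuple.monotone_sort g
  have hgi : g i = s (σ⁻¹ i) := by simp [hs]
  set a := σ⁻¹ i
  have hz : (⟨0, hn⟩ : Fin n) ≤ a := by
    rw [Fin.le_def]; exact Nat.zero_le _
  have hs0 : ∀ k : Fin n, 0 ≤ s k := fun k => hg _
  rw [hgi]
  unfold zeroP
  have hb0 : regBits g ⟨0, hn⟩ = true ↔ s ⟨0, hn⟩ = 0 := by
    simp [regBits, hs, hσ]
  constructor
  · intro h
    have h0 : s ⟨0, hn⟩ = 0 := le_antisymm (h ▸ hmono hz) (hs0 _)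
    refine ⟨hb0.mpr h0, ?_⟩
    have htie : s ⟨0, hn⟩ = s a := by rw [h0, h]
    rw [tie_iff_aux s hmono _ _ hz] at htie
    intro k hk1 hk2
    have hk0 : (k : ℕ) ≠ 0 := by
      have : (0 : ℕ) < (k : ℕ) := hk1
      omega
    simp only [regBits, if_neg hk0, decide_eq_false_iff_not]
    exact htie k hk1 hk2
  · rintro ⟨h0, h⟩
    have h0' : s ⟨0, hn⟩ = 0 := hb0.mp h0
    have htie : s ⟨0, hn⟩ = s a := by
      rw [tie_iff_aux s hmono _ _ hz]
      intro k hk1 hk2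
      have hk0 : (k : ℕ) ≠ 0 := by
        have : (0 : ℕ) < (k : ℕ) := hk1
        omega
      have := h k hk1 hk2
      simpa only [regBits, if_neg hk0, decide_eq_false_iff_not] using this
    rw [← htie, h0']

/-- Encoding of a valuation. -/
noncomputable def regEnc (n N M : ℕ) (hMN : 0 < M * N) (v : Fin n → ℝ) :
    (Fin n → Fin (M * N)) × Equiv.Perm (Fin n) × (Fin n → Bool) :=
  ⟨fun i => ⟨min (⌊(N : ℝ) * v i⌋).toNat (M * N - 1),
      lt_of_le_of_lt (min_le_right _ _) (Nat.sub_lt hMN one_pos)⟩,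
   Tuple.sort (fun i => Int.fract ((N : ℝ) * v i)),
   regBits (fun i => Int.fract ((N : ℝ) * v i))⟩

lemma regEnc_floor {n N M : ℕ} (hMN : 0 < M * N) (hN : 0 < N)
    {v w : Fin n → ℝ} (hv : ∀ i, v i ∈ Set.Ico (0 : ℝ) M) (hw : ∀ i, w i ∈ Set.Ico (0 : ℝ) M)
    (h : (regEnc n N M hMN v).1 = (regEnc n N M hMN w).1) (i : Fin n) :
    ⌊(N : ℝ) * v i⌋ = ⌊(N : ℝ) * w i⌋ := by
  have hb : ∀ u : Fin n → ℝ, (∀ i, u i ∈ Set.Ico (0 : ℝ) M) →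
      0 ≤ ⌊(N : ℝ) * u i⌋ ∧ ⌊(N : ℝ) * u i⌋ < (M * N : ℕ) := by
    intro u hu
    obtain ⟨h0, h1⟩ := hu i
    constructor
    · apply Int.floor_nonneg.mpr
      positivity
    · apply Int.floor_lt.mpr
      push_cast
      calc (N : ℝ) * u i < (N : ℝ) * M := by
            apply mul_lt_mul_of_pos_left h1
            exact_mod_cast hN
        _ = (M : ℝ) * N := by ring
  obtain ⟨hv0, hv1⟩ := hb v hv
  obtain ⟨hw0, hw1⟩ := hb w hw
  have := congrFun h i
  simp only [regEnc, Fin.mk.injEq] at this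
  omega

/-- The number of `1/N`-regions bounded by `M` over `n` clocks is at most
`n! * (2*M*N)^n`. -/
theorem number_of_regions_le (n N M : ℕ) (hn : 0 < n) (hN : 0 < N) (hM : 0 < M) :
    Set.ncard {C : Set (Fin n → ℝ) |
        ∃ v : Fin n → ℝ, (∀ i, v i ∈ Set.Ico (0 : ℝ) M) ∧
          C = {v' : Fin n → ℝ | (∀ i, v' i ∈ Set.Ico (0 : ℝ) M) ∧
            (∀ i, ⌊(N : ℝ) * v i⌋ = ⌊(N : ℝ) * v' i⌋) ∧
            (∀ i, Int.fract ((N : ℝ) * v i) = 0 ↔ Int.fract ((N : ℝ) * v' i) = 0) ∧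
            (∀ i j, Int.fract ((N : ℝ) * v i) ≤ Int.fract ((N : ℝ) * v j) ↔
              Int.fract ((N : ℝ) * v' i) ≤ Int.fract ((N : ℝ) * v' j))}} ≤
      n.factorial * (2 * M * N) ^ n := by
  classical
  have hMN : 0 < M * N := Nat.mul_pos hM hN
  set S : Set (Set (Fin n → ℝ)) := {C : Set (Fin n → ℝ) |
      ∃ v : Fin n → ℝ, (∀ i, v i ∈ Set.Ico (0 : ℝ) M) ∧
        C = {v' : Fin n → ℝ | (∀ i, v' i ∈ Set.Ico (0 : ℝ) M) ∧
          (∀ i, ⌊(N : ℝ) * v i⌋ = ⌊(N : ℝ) * v' i⌋) ∧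
          (∀ i, Int.fract ((N : ℝ) * v i) = 0 ↔ Int.fract ((N : ℝ) * v' i) = 0) ∧
          (∀ i j, Int.fract ((N : ℝ) * v i) ≤ Int.fract ((N : ℝ) * v j) ↔
            Int.fract ((N : ℝ) * v' i) ≤ Int.fract ((N : ℝ) * v' j))}} with hS
  have hmem : ∀ x : S, ∃ v : Fin n → ℝ, (∀ i, v i ∈ Set.Ico (0 : ℝ) M) ∧
      (x : Set (Fin n → ℝ)) = {v' : Fin n → ℝ | (∀ i, v' i ∈ Set.Ico (0 : ℝ) M) ∧
        (∀ i, ⌊(N : ℝ) * v i⌋ = ⌊(N : ℝ) * v' i⌋) ∧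
        (∀ i, Int.fract ((N : ℝ) * v i) = 0 ↔ Int.fract ((N : ℝ) * v' i) = 0) ∧
        (∀ i j, Int.fract ((N : ℝ) * v i) ≤ Int.fract ((N : ℝ) * v j) ↔
          Int.fract ((N : ℝ) * v' i) ≤ Int.fract ((N : ℝ) * v' j))} := fun x => x.2
  let F : S → (Fin n → Fin (M * N)) × Equiv.Perm (Fin n) × (Fin n → Bool) :=
    fun x => regEnc n N M hMN (hmem x).choose
  have hF : Function.Injective F := by
    intro x y hxy
    obtain ⟨hvI, hvC⟩ := (hmem x).choose_spec
    obtain ⟨hwI, hwC⟩ := (hmem y).choose_spec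
    set v := (hmem x).choose
    set w := (hmem y).choose
    have hxy' : regEnc n N M hMN v = regEnc n N M hMN w := hxy
    have h1 : (regEnc n N M hMN v).1 = (regEnc n N M hMN w).1 := by rw [hxy']
    have h2 : (regEnc n N M hMN v).2.1 = (regEnc n N M hMN w).2.1 := by rw [hxy']
    have h3 : (regEnc n N M hMN v).2.2 = (regEnc n N M hMN w).2.2 := by rw [hxy']
    simp only [regEnc] at h2 h3
    set gv : Fin n → ℝ := fun i => Int.fract ((N : ℝ) * v i) with hgv
    set gw : Fin n → ℝ := fun i => Int.fract ((N : ℝ) * w i) with hgw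
    have hfl : ∀ i, ⌊(N : ℝ) * v i⌋ = ⌊(N : ℝ) * w i⌋ := regEnc_floor hMN hN hvI hwI h1
    have hz : ∀ i, (gv i = 0 ↔ gw i = 0) := by
      intro i
      rw [zero_char hn gv (fun i => Int.fract_nonneg _),
        zero_char hn gw (fun i => Int.fract_nonneg _), h2, h3]
    have ho : ∀ i j, (gv i ≤ gv j ↔ gw i ≤ gw j) := by
      intro i j
      rw [order_char gv, order_char gw, h2, h3]
    apply Subtype.ext
    rw [hvC, hwC]
    ext u
    simp only [Set.mem_setOf_eq]
    constructor
    · rintro ⟨hu1, hu2, hu3, hu4⟩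
      exact ⟨hu1, fun i => (hfl i) ▸ hu2 i, fun i => ((hz i).symm).trans (hu3 i),
        fun i j => ((ho i j).symm).trans (hu4 i j)⟩
    · rintro ⟨hu1, hu2, hu3, hu4⟩
      exact ⟨hu1, fun i => (hfl i).symm ▸ hu2 i, fun i => (hz i).trans (hu3 i),
        fun i j => (ho i j).trans (hu4 i j)⟩
  calc Set.ncard S = Nat.card S := by rw [Nat.card_coe_set_eq]
    _ ≤ Nat.card ((Fin n → Fin (M * N)) × Equiv.Perm (Fin n) × (Fin n → Bool)) :=
        Nat.card_le_card_of_injective F hF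
    _ = (M * N) ^ n * (n.factorial * 2 ^ n) := by
        simp [Nat.card_eq_fintype_card, Fintype.card_perm]
    _ = n.factorial * (2 * M * N) ^ n := by
        rw [show 2 * M * N = 2 * (M * N) by ring, mul_pow]
        ring
end

section
/- Let r be a 1/N-region in [0,M)^n, i.e., an equivalence class of the relation identifying valuations with equal integer parts of N·v_i, equal zero-tests of the fractional parts of N·v_i, and equal ordering of the fractional parts of N·v_i. Then the topological closure of r contains at most n+1 points of the lattice (1/N)·ℤ^n. -/
/-- Key combinatorial lemma: a set of points, each of whose coordinates is either
`m i / N` or `(m i + 1)/N`, with rounding monotone along a fixed real-valued order,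
has at most `n+1` elements. -/
lemma region_corners_key {n N : ℕ} (hN : 0 < N) (m : Fin n → ℤ) (f : Fin n → ℝ)
    (A : Set (Fin n → ℝ))
    (hA : ∀ w ∈ A, ∀ i, w i = (m i : ℝ) / N ∨ w i = ((m i : ℝ) + 1) / N)
    (hmono : ∀ w ∈ A, ∀ i j, f i ≤ f j →
      (N : ℝ) * w i - m i ≤ (N : ℝ) * w j - m j) :
    A.ncard ≤ n + 1 := by
  classical
  have hNR : (0 : ℝ) < N := by exact_mod_cast hN
  set g : (Fin n → ℝ) → ℕ :=
    fun w => (Finset.univ.filter (fun i => w i ≠ (m i : ℝ) / N)).card with hg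
  have hval : ∀ w ∈ A, ∀ i,
      (N : ℝ) * w i - m i = if w i = (m i : ℝ) / N then 0 else 1 := by
    intro w hw i
    rcases hA w hw i with h | h
    · rw [if_pos h, h]; field_simp; ring
    · have hne : w i ≠ (m i : ℝ) / N := by
        rw [h]; intro hc
        field_simp at hc; linarith
      rw [if_neg hne, h]; field_simp; ring
  have hinj : Set.InjOn g A := by
    intro w hw w' hw' hcard
    set S := Finset.univ.filter (fun i => w i ≠ (m i : ℝ) / N) with hS
    set T := Finset.univ.filter (fun i => w' i ≠ (m i : ℝ) / N) with hT
    have hST : S ⊆ T ∨ T ⊆ S := by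
      by_contra h
      push_neg at h
      obtain ⟨h1, h2⟩ := h
      obtain ⟨i, hiS, hiT⟩ := Finset.not_subset.mp h1
      obtain ⟨j, hjT, hjS⟩ := Finset.not_subset.mp h2
      simp only [hS, hT, Finset.mem_filter, Finset.mem_univ, true_and, not_not] at hiS hiT hjT hjS
      rcases le_total (f i) (f j) with hle | hle
      · have := hmono w hw i j hle
        rw [hval w hw i, hval w hw j, if_neg hiS, if_pos hjS] at this
        linarith
      · have := hmono w' hw' j i hle
        rw [hval w' hw' j, hval w' hw' i, if_neg hjT, if_pos hiT] at this
        linarith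
    have hSeq : S = T := by
      rcases hST with h | h
      · exact Finset.eq_of_subset_of_card_le h (le_of_eq hcard.symm)
      · exact (Finset.eq_of_subset_of_card_le h (le_of_eq hcard)).symm
    funext i
    by_cases hi : i ∈ S
    · have hi' : i ∈ T := hSeq ▸ hi
      simp only [hS, hT, Finset.mem_filter, Finset.mem_univ, true_and] at hi hi'
      rcases hA w hw i with h | h
      · exact absurd h hi
      rcases hA w' hw' i with h' | h'
      · exact absurd h' hi'
      rw [h, h']
    · have hi' : i ∉ T := hSeq ▸ hi
      simp only [hS, hT, Finset.mem_filter, Finset.mem_univ, true_and, not_not] at hi hi'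
      rw [hi, hi']
  have hmaps : ∀ a ∈ A, g a ∈ Set.Iic n := by
    intro a _
    have := Finset.card_filter_le (Finset.univ : Finset (Fin n))
      (fun i => a i ≠ (m i : ℝ) / N)
    simpa [hg] using this.trans_eq (by simp)
  have hle := Set.ncard_le_ncard_of_injOn g hmaps hinj (Set.finite_Iic n)
  have hcount : (Set.Iic n).ncard = n + 1 := by
    rw [← Finset.coe_Iic, Set.ncard_coe_finset, Nat.card_Iic]
  omega

/-- The closure of a `1/N`-region in `[0,M)^n` contains at most `n+1` points of the
lattice `(1/N)·ℤ^n` (its corners). -/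
theorem region_corners_card_le (n N M : ℕ) (hn : 0 < n) (hN : 0 < N) (hM : 0 < M)
    (v0 : Fin n → ℝ) (hv0 : ∀ i, v0 i ∈ Set.Ico (0 : ℝ) M) :
    Set.ncard (closure {v : Fin n → ℝ | (∀ i, v i ∈ Set.Ico (0 : ℝ) M) ∧
        (∀ i, ⌊(N : ℝ) * v i⌋ = ⌊(N : ℝ) * v0 i⌋) ∧
        (∀ i, Int.fract ((N : ℝ) * v i) = 0 ↔ Int.fract ((N : ℝ) * v0 i) = 0) ∧
        (∀ i j, Int.fract ((N : ℝ) * v i) ≤ Int.fract ((N : ℝ) * v j) ↔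
          Int.fract ((N : ℝ) * v0 i) ≤ Int.fract ((N : ℝ) * v0 j))} ∩
      {v : Fin n → ℝ | ∀ i, ∃ k : ℤ, v i = (k : ℝ) / N}) ≤ n + 1 := by
  classical
  have hNR : (0 : ℝ) < N := by exact_mod_cast hN
  set m : Fin n → ℤ := fun i => ⌊(N : ℝ) * v0 i⌋ with hm
  set f : Fin n → ℝ := fun i => Int.fract ((N : ℝ) * v0 i) with hf
  set R : Set (Fin n → ℝ) := {v : Fin n → ℝ | (∀ i, v i ∈ Set.Ico (0 : ℝ) M) ∧
        (∀ i, ⌊(N : ℝ) * v i⌋ = ⌊(N : ℝ) * v0 i⌋) ∧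
        (∀ i, Int.fract ((N : ℝ) * v i) = 0 ↔ Int.fract ((N : ℝ) * v0 i) = 0) ∧
        (∀ i j, Int.fract ((N : ℝ) * v i) ≤ Int.fract ((N : ℝ) * v j) ↔
          Int.fract ((N : ℝ) * v0 i) ≤ Int.fract ((N : ℝ) * v0 j))} with hR
  set C : Set (Fin n → ℝ) :=
    {v | ∀ i, (m i : ℝ) ≤ (N : ℝ) * v i ∧ (N : ℝ) * v i ≤ (m i : ℝ) + 1} ∩
    {v | ∀ i j, f i ≤ f j → (N : ℝ) * v i - m i ≤ (N : ℝ) * v j - m j} with hC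
  have hCclosed : IsClosed C := by
    apply IsClosed.inter
    · rw [Set.setOf_forall]
      apply isClosed_iInter
      intro i
      rw [Set.setOf_and]
      exact IsClosed.inter
        (isClosed_le continuous_const (by fun_prop))
        (isClosed_le (by fun_prop) continuous_const)
    · rw [Set.setOf_forall]
      apply isClosed_iInter
      intro i
      rw [Set.setOf_forall]
      apply isClosed_iInter
      intro j
      by_cases h : f i ≤ f j
      · simp only [h, true_implies]
        exact isClosed_le (by fun_prop) (by fun_prop)
      · simp only [h, false_implies, Set.setOf_true]
        exact isClosed_univ
  have hRC : R ⊆ C := by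
    rintro v ⟨hIco, hfloor, hfz, hord⟩
    constructor
    · intro i
      have h1 : (m i : ℝ) ≤ (N : ℝ) * v i := by
        rw [hm]; dsimp only
        rw [← hfloor i]
        exact Int.floor_le _
      have h2 : (N : ℝ) * v i < (m i : ℝ) + 1 := by
        rw [hm]; dsimp only
        rw [← hfloor i]
        push_cast
        exact Int.lt_floor_add_one _
      exact ⟨h1, le_of_lt h2⟩
    · intro i j hle
      have h := (hord i j).mpr hle
      have hi : Int.fract ((N : ℝ) * v i) = (N : ℝ) * v i - m i := by
        rw [Int.fract, hfloor i]
      have hj : Int.fract ((N : ℝ) * v j) = (N : ℝ) * v j - m j := by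
        rw [Int.fract, hfloor j]
      rw [hi, hj] at h
      exact h
  have hcl : closure R ⊆ C := closure_minimal hRC hCclosed
  apply region_corners_key hN m f
  · rintro w ⟨hwc, hwl⟩ i
    obtain ⟨k, hk⟩ := hwl i
    have hNw : (N : ℝ) * w i = (k : ℝ) := by
      rw [hk]; field_simp
    have hbound := (hcl hwc).1 i
    rw [hNw] at hbound
    have h1 : m i ≤ k := by exact_mod_cast hbound.1
    have h2 : k ≤ m i + 1 := by exact_mod_cast hbound.2
    have : k = m i ∨ k = m i + 1 := by omega
    rcases this with h | h
    · left; rw [hk, h]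
    · right; rw [hk, h]; push_cast; ring_nf
  · rintro w ⟨hwc, _⟩ i j hle
    exact (hcl hwc).2 i j hle
end

section
/- Let G be a finite strongly connected directed graph with integer edge weights. If G contains a cycle of strictly positive total weight and a cycle of strictly negative total weight, then G contains a cycle of total weight exactly 0. -/
/-- A path given as a list of edges: every pair is an edge and consecutive
edges match (target of one is source of the next). -/
def IsEdgePath {V : Type*} (E : V → V → Prop) (p : List (V × V)) : Prop :=
  (∀ e ∈ p, E e.1 e.2) ∧ p.Chain' (fun e f => e.2 = f.1)

/-- A cycle: a nonempty edge path whose first source equals its last target. -/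
def IsCycle {V : Type*} (E : V → V → Prop) (p : List (V × V)) : Prop :=
  IsEdgePath E p ∧ p ≠ [] ∧ p.head?.map Prod.fst = p.getLast?.map Prod.snd

/-- A simple cycle: no repeated vertex except that the endpoints coincide,
i.e. the sources of its edges are pairwise distinct. -/
def IsSimpleCycle {V : Type*} (E : V → V → Prop) (p : List (V × V)) : Prop :=
  IsCycle E p ∧ (p.map Prod.fst).Nodup

/-- The total weight of a path/cycle: the sum of the weights of its edges. -/
def cycWeight {V : Type*} (w : V → V → ℤ) (p : List (V × V)) : ℤ :=
  (p.map fun e => w e.1 e.2).sum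

/-- A nonempty edge path from `a` to `b`. -/
def PathFrom {V : Type*} (E : V → V → Prop) (a b : V) (p : List (V × V)) : Prop :=
  IsEdgePath E p ∧ p.head?.map Prod.fst = some a ∧ p.getLast?.map Prod.snd = some b

lemma pathFrom_ne_nil {V : Type*} {E : V → V → Prop} {a b : V} {p : List (V × V)}
    (h : PathFrom E a b p) : p ≠ [] := by
  rcases h with ⟨_, hh, _⟩
  intro hp; subst hp; simp at hh

lemma pathFrom_append {V : Type*} {E : V → V → Prop} {a b c : V} {p q : List (V × V)}
    (h1 : PathFrom E a b p) (h2 : PathFrom E b c q) : PathFrom E a c (p ++ q) := by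
  obtain ⟨⟨hE1, hC1⟩, hh1, hl1⟩ := h1
  obtain ⟨⟨hE2, hC2⟩, hh2, hl2⟩ := h2
  refine ⟨⟨?_, ?_⟩, ?_, ?_⟩
  · intro e he; rcases List.mem_append.mp he with h | h
    · exact hE1 e h
    · exact hE2 e h
  · rw [List.Chain', List.isChain_append]
    refine ⟨hC1, hC2, ?_⟩
    intro x hx y hy
    obtain ⟨x', hx', hx2⟩ := Option.map_eq_some_iff.mp hl1
    obtain ⟨y', hy', hy1⟩ := Option.map_eq_some_iff.mp hh2
    rw [hx'] at hx; rw [hy'] at hy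
    simp only [Option.mem_def, Option.some_inj] at hx hy
    subst hx; subst hy; rw [hx2, hy1]
  · rw [List.head?_append]
    obtain ⟨x', hx', hx1⟩ := Option.map_eq_some_iff.mp hh1
    rw [hx']; simp [hx1]
  · rw [List.getLast?_append]
    obtain ⟨y', hy', hy2⟩ := Option.map_eq_some_iff.mp hl2
    rw [hy']; simp [hy2]

lemma cycWeight_append {V : Type*} (w : V → V → ℤ) (p q : List (V × V)) :
    cycWeight w (p ++ q) = cycWeight w p + cycWeight w q := by
  simp [cycWeight]

/-- `n`-fold repetition of an edge list. -/
def repL {V : Type*} (p : List (V × V)) : ℕ → List (V × V)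
  | 0 => []
  | n + 1 => p ++ repL p n

lemma cycWeight_repL {V : Type*} (w : V → V → ℤ) (p : List (V × V)) (n : ℕ) :
    cycWeight w (repL p n) = n * cycWeight w p := by
  induction n with
  | zero => simp [repL, cycWeight]
  | succ n ih => rw [repL, cycWeight_append, ih]; push_cast; ring

lemma pathFrom_repL_append {V : Type*} {E : V → V → Prop} {a c : V}
    {p r : List (V × V)} (hp : PathFrom E a a p) (hr : PathFrom E a c r) (n : ℕ) :
    PathFrom E a c (repL p n ++ r) := by
  induction n with
  | zero => simpa [repL] using hr
  | succ n ih =>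
    rw [repL, List.append_assoc]
    exact pathFrom_append hp ih

lemma pathFrom_repL {V : Type*} {E : V → V → Prop} {a : V}
    {p : List (V × V)} (hp : PathFrom E a a p) (n : ℕ) (hn : 1 ≤ n) :
    PathFrom E a a (repL p n) := by
  induction n with
  | zero => omega
  | succ n ih =>
    rw [repL]
    rcases Nat.eq_zero_or_pos n with rfl | hn'
    · simpa [repL] using hp
    · exact pathFrom_append hp (ih hn')

/-- The basic combination: repeat cycle `u` at `a` then cycle `v` at `a`. -/
lemma combo {V : Type*} {E : V → V → Prop} {a : V} {u v : List (V × V)}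
    (hu : PathFrom E a a u) (hv : PathFrom E a a v) (m k : ℕ) (hk : 1 ≤ k) :
    PathFrom E a a (repL u m ++ repL v k) :=
  pathFrom_repL_append hu (pathFrom_repL hv k hk) m

lemma isCycle_of_pathFrom {V : Type*} {E : V → V → Prop} {a : V} {p : List (V × V)}
    (h : PathFrom E a a p) : IsCycle E p := by
  obtain ⟨hep, hh, hl⟩ := h
  exact ⟨hep, pathFrom_ne_nil ⟨hep, hh, hl⟩, by rw [hh, hl]⟩

lemma pathFrom_of_isCycle {V : Type*} {E : V → V → Prop} {p : List (V × V)}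
    (h : IsCycle E p) : ∃ a, PathFrom E a a p := by
  obtain ⟨hep, hne, heq⟩ := h
  obtain ⟨e, he⟩ := List.exists_mem_of_ne_nil p hne
  have hh : p.head? = some (p.head hne) := List.head?_eq_head hne
  refine ⟨(p.head hne).1, hep, ?_, ?_⟩
  · rw [hh]; rfl
  · rw [← heq, hh]; rfl

lemma pathFrom_of_reflTransGen {V : Type*} {E : V → V → Prop} {a b : V}
    (h : Relation.ReflTransGen E a b) : a = b ∨ ∃ p, PathFrom E a b p := by
  induction h with
  | refl => exact Or.inl rfl
  | @tail x y _ e ih =>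
    right
    have hx : PathFrom E x y [(x, y)] := by
      refine ⟨⟨?_, ?_⟩, ?_, ?_⟩ <;> simp [e, List.Chain']
    rcases ih with rfl | ⟨p, hp⟩
    · exact ⟨_, hx⟩
    · exact ⟨p ++ [(x, y)], pathFrom_append hp hx⟩

/-- A finite strongly connected weighted graph containing a strictly positive
cycle and a strictly negative cycle contains a cycle of weight exactly 0. -/
theorem zero_cycle_of_pos_and_neg_cycles {V : Type*} [Fintype V]
    (E : V → V → Prop) (w : V → V → ℤ)
    (hconn : ∀ u v : V, Relation.ReflTransGen E u v)
    (c1 c2 : List (V × V))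
    (h1 : IsCycle E c1) (h1pos : 0 < cycWeight w c1)
    (h2 : IsCycle E c2) (h2neg : cycWeight w c2 < 0) :
    ∃ c, IsCycle E c ∧ cycWeight w c = 0 := by
  obtain ⟨a, hp1⟩ := pathFrom_of_isCycle h1
  obtain ⟨b, hp2⟩ := pathFrom_of_isCycle h2
  set W1 := cycWeight w c1 with hW1
  set W2 := cycWeight w c2 with hW2
  have hW1t : ((W1.toNat : ℤ)) = W1 := Int.toNat_of_nonneg h1pos.le
  have hW2t : (((-W2).toNat : ℤ)) = -W2 := Int.toNat_of_nonneg (by omega)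
  have hW1k : 1 ≤ W1.toNat := by omega
  have hW2k : 1 ≤ (-W2).toNat := by omega
  by_cases hab : a = b
  · -- both cycles at the same vertex
    subst hab
    refine ⟨repL c1 (-W2).toNat ++ repL c2 W1.toNat,
      isCycle_of_pathFrom (combo hp1 hp2 _ _ hW1k), ?_⟩
    rw [cycWeight_append, cycWeight_repL, cycWeight_repL, hW1t, hW2t]
    ring
  · -- get connecting paths
    rcases pathFrom_of_reflTransGen (hconn a b) with h | ⟨p, hp⟩
    · exact absurd h hab
    rcases pathFrom_of_reflTransGen (hconn b a) with h | ⟨q, hq⟩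
    · exact absurd h.symm hab
    set s := cycWeight w p + cycWeight w q with hs
    rcases le_or_gt s 0 with hsle | hsgt
    · -- loop at a : p ++ q, weight s ≤ 0
      have hloop : PathFrom E a a (p ++ q) := pathFrom_append hp hq
      have hst : (((-s).toNat : ℤ)) = -s := Int.toNat_of_nonneg (by omega)
      refine ⟨repL c1 (-s).toNat ++ repL (p ++ q) W1.toNat,
        isCycle_of_pathFrom (combo hp1 hloop _ _ hW1k), ?_⟩
      rw [cycWeight_append, cycWeight_repL, cycWeight_repL, hW1t, hst,
        cycWeight_append, ← hs]
      ring
    · -- loop at b : q ++ p, weight s > 0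
      have hloop : PathFrom E b b (q ++ p) := pathFrom_append hq hp
      have hst : ((s.toNat : ℤ)) = s := Int.toNat_of_nonneg hsgt.le
      refine ⟨repL c2 s.toNat ++ repL (q ++ p) (-W2).toNat,
        isCycle_of_pathFrom (combo hp2 hloop _ _ hW2k), ?_⟩
      rw [cycWeight_append, cycWeight_repL, cycWeight_repL, hW2t, hst,
        cycWeight_append]
      have : cycWeight w q + cycWeight w p = s := by rw [hs]; ring
      rw [this]; ring
end
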